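/- Let A be an alphabet (an arbitrary type, possibly infinite), M a finite monoid with idempotent exponent n satisfying the DA identity for n, and β : A* → M a monoid morphism. Then for every m ∈ M, the language U_m = {w ∈ A* : m*β(w) ∼_R m} equals the set of all words w ∈ A* such that every letter a occurring in w satisfies m*β(a) ∼_R m. -/

import Mathlib

/-- Green's right preorder: `m ≤_R m'` iff `m = m' * k` for some `k`. -/
def rLe {M : Type*} [Monoid M] (m m' : M) : Prop := ∃ k, m = m' * k

/-- Green's right equivalence `∼_R`. -/
def rEquiv {M : Type*} [Monoid M] (m m' : M) : Prop := rLe m m' ∧ rLe m' m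

private lemma ulangAux_conj {M : Type*} [Monoid M] (a b : M) (k : ℕ) :
    b * (a * b) ^ k = (b * a) ^ k * b := by
  induction k with
  | zero => simp
  | succ k ih =>
    calc b * (a * b) ^ (k + 1) = b * ((a * b) ^ k * (a * b)) := by rw [pow_succ]
      _ = (b * (a * b) ^ k) * (a * b) := by simp only [mul_assoc]
      _ = ((b * a) ^ k * b) * (a * b) := by rw [ih]
      _ = (b * a) ^ (k + 1) * b := by rw [pow_succ]; simp only [mul_assoc]

private lemma ulangAux_split {M : Type*} [Monoid M] (a b : M) (k : ℕ) :
    (a * b) ^ (k + 1) = a * ((b * a) ^ k * b) := by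
  calc (a * b) ^ (k + 1) = (a * b) * (a * b) ^ k := by rw [pow_succ']
    _ = a * (b * (a * b) ^ k) := by simp only [mul_assoc]
    _ = a * ((b * a) ^ k * b) := by rw [ulangAux_conj]

private lemma ulangAux_fixpow {M : Type*} [Monoid M] (m x : M) (h : m * x = m) (k : ℕ) :
    m * x ^ k = m := by
  induction k with
  | zero => simp
  | succ k ih => rw [pow_succ, ← mul_assoc, ih, h]

/-- suffix insertion: with `e = (UV)^n` we have `e V e = e`. -/
private lemma ulangAux_suf {M : Type*} [Monoid M] (n : ℕ) (hn : 0 < n)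
    (hidem : ∀ x : M, x ^ n * x ^ n = x ^ n)
    (hDA : ∀ m k : M, (m * k) ^ n * m * (m * k) ^ n = (m * k) ^ n)
    (U V : M) : (U * V) ^ n * V * (U * V) ^ n = (U * V) ^ n := by
  obtain ⟨p, hp⟩ : ∃ p, n = p + 1 := ⟨n - 1, by omega⟩
  have aper : ∀ x : M, x ^ (n + 1) = x ^ n := by
    intro x
    have h1 : x ^ n * x * x ^ n = x ^ n := by simpa using hDA x 1
    have h2 : x ^ n * x ^ n = x ^ n := hidem x
    have hc : x * x ^ n = x ^ n * x := (pow_succ' x n).symm.trans (pow_succ x n)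
    calc x ^ (n + 1) = x * x ^ n := pow_succ' x n
      _ = x * (x ^ n * x ^ n) := by rw [h2]
      _ = (x * x ^ n) * x ^ n := by rw [mul_assoc]
      _ = x ^ n * x * x ^ n := by rw [hc]
      _ = x ^ n := h1
  have hge : ∀ (x : M) (k : ℕ), n ≤ k → x ^ k = x ^ n := by
    intro x k hk
    induction k, hk using Nat.le_induction with
    | base => rfl
    | succ k hk ih =>
      calc x ^ (k + 1) = x * x ^ k := pow_succ' x k
        _ = x * x ^ n := by rw [ih]
        _ = x ^ (n + 1) := (pow_succ' x n).symm
        _ = x ^ n := aper x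
  have h2 : (U * V) ^ n = U * ((V * U) ^ n * V) := by
    calc (U * V) ^ n = (U * V) ^ n * (U * V) ^ n := (hidem (U * V)).symm
      _ = (U * V) ^ ((n + p) + 1) := by rw [← pow_add]; congr 1; omega
      _ = U * ((V * U) ^ (n + p) * V) := ulangAux_split U V (n + p)
      _ = U * ((V * U) ^ n * V) := by rw [hge (V * U) (n + p) (by omega)]
  have h3 : V * (U * V) ^ n = (V * U) ^ n * V := ulangAux_conj U V n
  have h4 : (V * U) ^ n * V * (V * U) ^ n = (V * U) ^ n := hDA V U
  calc (U * V) ^ n * V * (U * V) ^ n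
      = (U * ((V * U) ^ n * V)) * V * (U * V) ^ n := by rw [← h2]
    _ = U * ((V * U) ^ n * (V * (V * (U * V) ^ n))) := by simp only [mul_assoc]
    _ = U * ((V * U) ^ n * (V * ((V * U) ^ n * V))) := by rw [h3]
    _ = U * (((V * U) ^ n * V * (V * U) ^ n) * V) := by simp only [mul_assoc]
    _ = U * ((V * U) ^ n * V) := by rw [h4]
    _ = (U * V) ^ n := h2.symm

/-- deletion lemma: if `m a b c = m` then `m b t = m` for some `t`. -/
private lemma ulangAux_core {M : Type*} [Monoid M] (n : ℕ) (hn : 0 < n)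
    (hidem : ∀ x : M, x ^ n * x ^ n = x ^ n)
    (hDA : ∀ m k : M, (m * k) ^ n * m * (m * k) ^ n = (m * k) ^ n)
    (m a b c : M) (h : m * a * b * c = m) : ∃ t, m * b * t = m := by
  have h0 : m * (a * (b * c)) = m := by simpa only [mul_assoc] using h
  have hF : m * (a * (b * c)) ^ n = m := ulangAux_fixpow m _ h0 n
  have hs : (a * (b * c)) ^ n * (b * (c * (a * (b * c)) ^ n)) = (a * (b * c)) ^ n := by
    have := ulangAux_suf n hn hidem hDA a (b * c)
    simpa only [mul_assoc] using this
  refine ⟨c * (a * (b * c)) ^ n, ?_⟩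
  conv_lhs => rw [← hF]
  calc m * (a * (b * c)) ^ n * b * (c * (a * (b * c)) ^ n)
      = m * ((a * (b * c)) ^ n * (b * (c * (a * (b * c)) ^ n))) := by simp only [mul_assoc]
    _ = m * (a * (b * c)) ^ n := by rw [hs]
    _ = m := hF

private lemma ulangAux_key {A M : Type*} [Monoid M] (n : ℕ) (hn : 0 < n)
    (hidem : ∀ x : M, x ^ n * x ^ n = x ^ n)
    (hDA : ∀ m k : M, (m * k) ^ n * m * (m * k) ^ n = (m * k) ^ n)
    (β : List A → M) (hβ1 : β [] = 1)
    (hβmul : ∀ u v : List A, β (u ++ v) = β u * β v) :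
    ∀ (w : List A) (m : M),
      (∃ k, m = m * β w * k) ↔ (∀ a ∈ w, ∃ k, m = m * β [a] * k) := by
  intro w
  induction w with
  | nil =>
    intro m
    constructor
    · intro _ a ha; exact absurd ha List.not_mem_nil
    · intro _; exact ⟨1, by rw [hβ1, mul_one, mul_one]⟩
  | cons a w' ih =>
    intro m
    have hsplit : β (a :: w') = β [a] * β w' := by
      have h : a :: w' = [a] ++ w' := rfl
      rw [h, hβmul]
    constructor
    · rintro ⟨k, hk⟩
      rw [hsplit] at hk
      have hfix : m * β [a] * (β w' * k) = m := by
        simpa only [mul_assoc] using hk.symm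
      intro b hb
      rcases List.mem_cons.mp hb with rfl | hbw'
      · exact ⟨β w' * k, hfix.symm⟩
      · have hm' : ∃ k', m * β [a] = m * β [a] * β w' * k' := by
          refine ⟨k * β [a], ?_⟩
          conv_lhs => rw [← hfix]
          simp only [mul_assoc]
        obtain ⟨kb, hkb⟩ := (ih (m * β [a])).mp hm' b hbw'
        have hcore : m * β [a] * β [b] * (kb * (β w' * k)) = m := by
          calc m * β [a] * β [b] * (kb * (β w' * k))
              = (m * β [a] * β [b] * kb) * (β w' * k) := by simp only [mul_assoc]
            _ = (m * β [a]) * (β w' * k) := by rw [← hkb]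
            _ = m := hfix
        obtain ⟨t, ht⟩ := ulangAux_core n hn hidem hDA m (β [a]) (β [b])
          (kb * (β w' * k)) hcore
        exact ⟨t, ht.symm⟩
    · intro hall
      obtain ⟨q, hq⟩ := hall a List.mem_cons_self
      have h1 : m * β [a] * q = m := hq.symm
      have hw' : ∀ b ∈ w', ∃ kb, m * β [a] = m * β [a] * β [b] * kb := by
        intro b hb
        obtain ⟨qb, hqb⟩ := hall b (List.mem_cons_of_mem a hb)
        have hfix2 : (m * β [a]) * q * β [b] * (qb * β [a]) = m * β [a] := by
          calc m * β [a] * q * β [b] * (qb * β [a])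
              = m * β [b] * (qb * β [a]) := by rw [h1]
            _ = (m * β [b] * qb) * β [a] := by simp only [mul_assoc]
            _ = m * β [a] := by rw [← hqb]
        obtain ⟨t, ht⟩ := ulangAux_core n hn hidem hDA (m * β [a]) q (β [b])
          (qb * β [a]) hfix2
        exact ⟨t, ht.symm⟩
      obtain ⟨r, hr⟩ := (ih (m * β [a])).mpr hw'
      refine ⟨r * q, ?_⟩
      rw [hsplit]
      calc m = m * β [a] * q := hq
        _ = (m * β [a] * β w' * r) * q := by rw [← hr]
        _ = m * (β [a] * β w') * (r * q) := by simp only [mul_assoc]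

/-- Let `β : A* → M` be a monoid morphism into a finite monoid with idempotent exponent
`n` satisfying the DA identity for `n`. Then `U_m = {w : m·β(w) ∼_R m}` equals the set
of all words each of whose letters `a` satisfies `m·β(a) ∼_R m`. -/
theorem ulang_eq_starLang {A M : Type*} [Monoid M] [Finite M] (n : ℕ) (hn : 0 < n)
    (hidem : ∀ x : M, x ^ n * x ^ n = x ^ n)
    (hDA : ∀ m k : M, (m * k) ^ n * m * (m * k) ^ n = (m * k) ^ n)
    (β : List A → M) (hβ1 : β [] = 1)
    (hβmul : ∀ u v : List A, β (u ++ v) = β u * β v)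
    (m : M) :
    {w : List A | rEquiv (m * β w) m} =
      {w : List A | ∀ a ∈ w, rEquiv (m * β [a]) m} := by
  have key := ulangAux_key n hn hidem hDA β hβ1 hβmul
  ext w
  simp only [Set.mem_setOf_eq]
  constructor
  · intro hw a ha
    exact ⟨⟨β [a], rfl⟩, (key w m).mp hw.2 a ha⟩
  · intro hall
    exact ⟨⟨β w, rfl⟩, (key w m).mpr (fun a ha => (hall a ha).2)⟩
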